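/- Existence and uniqueness for the deterministic reflected integral equation (pathwise counterpart of the reflected diffusion): let b : ℝᴺ → ℝᴺ be Lipschitz, let x₀ ∈ ℝᴺ satisfy 1·x₀ ≤ θ, and let w : [0,T] → ℝᴺ be continuous with w(0) = 0. Then there exists exactly one continuous x : [0,T] → ℝᴺ satisfying the fixed-point equation x(t) = Γ(x₀ + w + ∫₀^· b(x(u)) du)(t) for all t ∈ [0,T]. Moreover, setting ℓ = g_{x₀ + w + ∫₀^· b(x(u)) du}, the pair (x, ℓ) is the unique pair of continuous functions such that: ℓ is nondecreasing with ℓ(0) = 0; x(t) = x₀ + w(t) + ∫₀^t b(x(u)) du − ℓ(t) e_N for all t; 1·x(t) ≤ θ for all t; and ℓ is constant on every subinterval of [0,T] on which 1·x < θ. -/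

import Mathlib

open Set

/-- The coordinate sum `1 · x` of a vector in Euclidean space. -/
noncomputable def sumC {N : ℕ} (x : EuclideanSpace ℝ (Fin N)) : ℝ := ∑ i, x i

/-- The regulator `g_f(t) = sup_{0 ≤ u ≤ t} (θ - 1·f(u))⁻`. -/
noncomputable def reg (N : ℕ) (θ : ℝ) (f : ℝ → EuclideanSpace ℝ (Fin N)) (t : ℝ) : ℝ :=
  sSup ((fun u => max (sumC (f u) - θ) 0) '' Icc 0 t)

/-- The `N`-th standard basis vector `e_N`. -/
noncomputable def eN (N : ℕ) (hN : 1 ≤ N) : EuclideanSpace ℝ (Fin N) :=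
  EuclideanSpace.single ⟨N - 1, by omega⟩ 1

/-- The Skorohod-type reflection map `Γ(f)(t) = f(t) - g_f(t) e_N`. -/
noncomputable def Gam (N : ℕ) (hN : 1 ≤ N) (θ : ℝ) (f : ℝ → EuclideanSpace ℝ (Fin N))
    (t : ℝ) : EuclideanSpace ℝ (Fin N) :=
  f t - reg N θ f t • eN N hN

/-- The sup norm `‖f‖_T = sup_{t ∈ [0,T]} ‖f(t)‖`. -/
noncomputable def supNorm (N : ℕ) (T : ℝ) (f : ℝ → EuclideanSpace ℝ (Fin N)) : ℝ :=
  sSup ((fun t => ‖f t‖) '' Icc 0 T)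

/-! ### Auxiliary lemmas -/

abbrev EE (N : ℕ) := EuclideanSpace ℝ (Fin N)

lemma sumC_sub {N : ℕ} (x y : EE N) : sumC (x - y) = sumC x - sumC y := by
  simp [sumC, Finset.sum_sub_distrib]

lemma sumC_smul {N : ℕ} (c : ℝ) (x : EE N) : sumC (c • x) = c * sumC x := by
  simp [sumC, Finset.mul_sum]

lemma sumC_eN {N : ℕ} (hN : 1 ≤ N) : sumC (eN N hN) = 1 := by
  simp [sumC, eN, EuclideanSpace.single_apply]

lemma norm_eN {N : ℕ} (hN : 1 ≤ N) : ‖eN N hN‖ = 1 := by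
  simp [eN, EuclideanSpace.norm_single]

lemma sumC_continuous {N : ℕ} : Continuous (sumC : EE N → ℝ) := by
  unfold sumC
  exact continuous_finset_sum _ (fun i _ => (EuclideanSpace.proj (𝕜 := ℝ) i).continuous)

lemma abs_sumC_le {N : ℕ} (x : EE N) : |sumC x| ≤ Real.sqrt N * ‖x‖ := by
  classical
  set o : EE N := (WithLp.equiv 2 (Fin N → ℝ)).symm (fun _ => 1) with ho
  have h1 : inner ℝ o x = sumC x := by
    simp [PiLp.inner_apply, sumC, o]
  have h2 : ‖o‖ = Real.sqrt N := by
    rw [EuclideanSpace.norm_eq]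
    simp [o]
  calc |sumC x| = |inner ℝ o x| := by rw [h1]
    _ ≤ ‖o‖ * ‖x‖ := abs_real_inner_le_norm o x
    _ = Real.sqrt N * ‖x‖ := by rw [h2]

lemma csSup_image_le {g : ℝ → ℝ} {s : Set ℝ} (hne : s.Nonempty) {M : ℝ}
    (h : ∀ u ∈ s, g u ≤ M) : sSup (g '' s) ≤ M :=
  csSup_le (hne.image g) (by rintro _ ⟨u, hu, rfl⟩; exact h u hu)

lemma le_csSup_image {g : ℝ → ℝ} {s : Set ℝ} {u : ℝ} (hu : u ∈ s)
    (hb : BddAbove (g '' s)) : g u ≤ sSup (g '' s) :=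
  le_csSup hb ⟨u, hu, rfl⟩

lemma bddAbove_image_Icc {g : ℝ → ℝ} {a b : ℝ} (hg : ContinuousOn g (Icc a b)) :
    BddAbove (g '' Icc a b) := (isCompact_Icc.image_of_continuousOn hg).bddAbove

/-- continuity of the running sup of a continuous function -/
lemma continuousOn_runSup {g : ℝ → ℝ} {T : ℝ} (hg : ContinuousOn g (Icc 0 T)) :
    ContinuousOn (fun t => sSup (g '' Icc 0 t)) (Icc 0 T) := by
  intro t₀ ht₀
  rw [Metric.continuousWithinAt_iff]
  intro ε hε
  obtain ⟨δ, hδ, hu⟩ := (Metric.uniformContinuousOn_iff.1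
    (isCompact_Icc.uniformContinuousOn_of_continuous hg)) (ε/2) (by linarith)
  refine ⟨δ, hδ, fun {t} ht hd => ?_⟩
  have key : ∀ s t : ℝ, s ∈ Icc 0 T → t ∈ Icc 0 T → s ≤ t → dist s t < δ →
      sSup (g '' Icc 0 t) ≤ sSup (g '' Icc 0 s) + ε/2 ∧
      sSup (g '' Icc 0 s) ≤ sSup (g '' Icc 0 t) := by
    intro s t hs ht hst hd
    have hbs : BddAbove (g '' Icc 0 s) :=
      bddAbove_image_Icc (hg.mono (Icc_subset_Icc le_rfl hs.2))
    refine ⟨csSup_le ((nonempty_Icc.2 (le_trans hs.1 hst)).image g) ?_, ?_⟩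
    · rintro _ ⟨u, hu', rfl⟩
      rcases le_or_gt u s with h | h
      · have : g u ≤ sSup (g '' Icc 0 s) := le_csSup_image ⟨hu'.1, h⟩ hbs
        linarith
      · have hus : dist u s < δ := by
          rw [Real.dist_eq, abs_of_nonneg (by linarith)]
          rw [Real.dist_eq] at hd
          have := le_abs_self (s - t)
          have := neg_abs_le (s - t)
          linarith [hu'.2]
        have h1 : dist (g u) (g s) < ε/2 :=
          hu u ⟨le_trans hs.1 h.le, le_trans hu'.2 ht.2⟩ s hs hus
        have h2 : g s ≤ sSup (g '' Icc 0 s) := le_csSup_image ⟨hs.1, le_rfl⟩ hbs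
        rw [Real.dist_eq] at h1
        have := abs_lt.1 h1
        linarith [this.1]
    · exact csSup_le_csSup (bddAbove_image_Icc (hg.mono (Icc_subset_Icc le_rfl ht.2)))
        ((nonempty_Icc.2 hs.1).image g) (image_mono (Icc_subset_Icc le_rfl hst))
  rcases le_total t t₀ with h | h
  · obtain ⟨h1, h2⟩ := key t t₀ ht ht₀ h hd
    rw [Real.dist_eq, abs_lt]
    constructor <;> linarith
  · obtain ⟨h1, h2⟩ := key t₀ t ht₀ ht h (by rw [dist_comm]; exact hd)
    rw [Real.dist_eq, abs_lt]
    constructor <;> linarith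

section regs
variable {N : ℕ} {θ T : ℝ} {f f' : ℝ → EE N}

lemma gfun_cont (hf : ContinuousOn f (Icc 0 T)) :
    ContinuousOn (fun u => max (sumC (f u) - θ) 0) (Icc 0 T) :=
  ((sumC_continuous.comp_continuousOn hf).sub continuousOn_const).sup continuousOn_const

lemma reg_bdd (hf : ContinuousOn f (Icc 0 T)) {t : ℝ} (ht : t ∈ Icc 0 T) :
    BddAbove ((fun u => max (sumC (f u) - θ) 0) '' Icc 0 t) :=
  bddAbove_image_Icc ((gfun_cont hf).mono (Icc_subset_Icc le_rfl ht.2))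

lemma reg_continuousOn (hf : ContinuousOn f (Icc 0 T)) :
    ContinuousOn (reg N θ f) (Icc 0 T) :=
  continuousOn_runSup (gfun_cont hf)

lemma reg_mono (hf : ContinuousOn f (Icc 0 T)) {s t : ℝ} (h0 : 0 ≤ s) (hst : s ≤ t)
    (ht : t ∈ Icc 0 T) : reg N θ f s ≤ reg N θ f t :=
  csSup_le_csSup (reg_bdd hf ht) ((nonempty_Icc.2 h0).image _)
    (image_mono (Icc_subset_Icc le_rfl hst))

lemma le_reg (hf : ContinuousOn f (Icc 0 T)) {u t : ℝ} (hu : u ∈ Icc 0 t)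
    (ht : t ∈ Icc 0 T) : max (sumC (f u) - θ) 0 ≤ reg N θ f t :=
  le_csSup_image (g := fun u => max (sumC (f u) - θ) 0) (s := Icc 0 t) hu (reg_bdd hf ht)

lemma reg_le {t M : ℝ} (h0 : 0 ≤ t)
    (h : ∀ u ∈ Icc (0:ℝ) t, max (sumC (f u) - θ) 0 ≤ M) : reg N θ f t ≤ M :=
  csSup_image_le (nonempty_Icc.2 h0) h

lemma reg_nonneg (hf : ContinuousOn f (Icc 0 T)) {t : ℝ} (ht : t ∈ Icc 0 T) :
    0 ≤ reg N θ f t :=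
  le_trans (le_max_right _ 0) (le_reg hf ⟨ht.1, le_rfl⟩ ht)

lemma sub_le_reg (hf : ContinuousOn f (Icc 0 T)) {t : ℝ} (ht : t ∈ Icc 0 T) :
    sumC (f t) - θ ≤ reg N θ f t :=
  le_trans (le_max_left _ 0) (le_reg hf ⟨ht.1, le_rfl⟩ ht)

lemma reg_congr {t : ℝ} (h : ∀ u ∈ Icc (0:ℝ) t, f u = f' u) :
    reg N θ f t = reg N θ f' t := by
  unfold reg
  congr 1
  exact image_congr (fun u hu => by rw [h u hu])

lemma reg_le_reg_add (hf' : ContinuousOn f' (Icc 0 T)) {t ε : ℝ} (ht : t ∈ Icc 0 T)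
    (h : ∀ u ∈ Icc (0:ℝ) t, |sumC (f u) - sumC (f' u)| ≤ ε) :
    reg N θ f t ≤ reg N θ f' t + ε := by
  refine csSup_image_le (nonempty_Icc.2 ht.1) (fun u hu => ?_)
  have h1 : max (sumC (f' u) - θ) 0 ≤ reg N θ f' t := le_reg hf' hu ht
  have h2 := abs_le.1 (h u hu)
  have : max (sumC (f u) - θ) 0 ≤ max (sumC (f' u) - θ) 0 + ε := by
    rcases le_total (sumC (f u) - θ) 0 with h3 | h3
    · have : (0:ℝ) ≤ ε := le_trans (abs_nonneg _) (h u hu)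
      simp only [max_eq_right h3]
      positivity
    · rw [max_eq_left h3]
      have := le_max_left (sumC (f' u) - θ) 0
      linarith [h2.1]
  linarith

lemma reg_zero : reg N θ f 0 = max (sumC (f 0) - θ) 0 := by
  unfold reg
  rw [Icc_self, image_singleton, csSup_singleton]

/-- Lipschitz-type bound for the reflection map. -/
lemma gam_dist (hN : 1 ≤ N) (hf : ContinuousOn f (Icc 0 T))
    (hf' : ContinuousOn f' (Icc 0 T)) {t ε : ℝ} (ht : t ∈ Icc 0 T) (hε : 0 ≤ ε)
    (h : ∀ u ∈ Icc (0:ℝ) t, ‖f u - f' u‖ ≤ ε) :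
    ‖Gam N hN θ f t - Gam N hN θ f' t‖ ≤ (1 + Real.sqrt N) * ε := by
  have hsum : ∀ u ∈ Icc (0:ℝ) t, |sumC (f u) - sumC (f' u)| ≤ Real.sqrt N * ε := by
    intro u hu
    rw [← sumC_sub]
    refine (abs_sumC_le _).trans ?_
    exact mul_le_mul_of_nonneg_left (h u hu) (Real.sqrt_nonneg _)
  have hsum' : ∀ u ∈ Icc (0:ℝ) t, |sumC (f' u) - sumC (f u)| ≤ Real.sqrt N * ε := by
    intro u hu; rw [abs_sub_comm]; exact hsum u hu
  have h1 : reg N θ f t ≤ reg N θ f' t + Real.sqrt N * ε := reg_le_reg_add hf' ht hsum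
  have h2 : reg N θ f' t ≤ reg N θ f t + Real.sqrt N * ε := reg_le_reg_add hf ht hsum'
  have e1 : Gam N hN θ f t - Gam N hN θ f' t
      = (f t - f' t) - (reg N θ f t - reg N θ f' t) • eN N hN := by
    unfold Gam; rw [sub_smul]; abel
  rw [e1]
  calc ‖(f t - f' t) - (reg N θ f t - reg N θ f' t) • eN N hN‖
      ≤ ‖f t - f' t‖ + ‖(reg N θ f t - reg N θ f' t) • eN N hN‖ := norm_sub_le _ _
    _ = ‖f t - f' t‖ + |reg N θ f t - reg N θ f' t| := by
        rw [norm_smul, norm_eN hN, mul_one, Real.norm_eq_abs]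
    _ ≤ ε + Real.sqrt N * ε := by
        refine add_le_add (h t ⟨ht.1, le_rfl⟩) (abs_le.2 ⟨by linarith, by linarith⟩)
    _ = (1 + Real.sqrt N) * ε := by ring

end regs

section picard
open MeasureTheory intervalIntegral

variable {N : ℕ} {T : ℝ}

/-- Extension of a continuous map on `[0,T]` to all of `ℝ`. -/
noncomputable def extIcc (hT : (0:ℝ) ≤ T) (A : C(Icc (0:ℝ) T, EE N)) : ℝ → EE N :=
  fun u => A (projIcc 0 T hT u)

lemma extIcc_cont (hT : (0:ℝ) ≤ T) (A : C(Icc (0:ℝ) T, EE N)) :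
    Continuous (extIcc hT A) := A.continuous.comp continuous_projIcc

lemma extIcc_eq (hT : (0:ℝ) ≤ T) (A : C(Icc (0:ℝ) T, EE N)) {u : ℝ}
    (hu : u ∈ Icc (0:ℝ) T) : extIcc hT A u = A ⟨u, hu⟩ := by
  unfold extIcc; rw [projIcc_of_mem]

/-- The drift-plus-noise path associated to a candidate solution. -/
noncomputable def FF (hT : (0:ℝ) ≤ T) (b : EE N → EE N) (x₀ : EE N) (w : ℝ → EE N)
    (A : C(Icc (0:ℝ) T, EE N)) : ℝ → EE N :=
  fun r => x₀ + w r + ∫ u in (0:ℝ)..r, b (extIcc hT A u)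

lemma FF_cont (hT : (0:ℝ) ≤ T) {b : EE N → EE N} (hb : Continuous b) (x₀ : EE N)
    {w : ℝ → EE N} (hw : ContinuousOn w (Icc 0 T)) (A : C(Icc (0:ℝ) T, EE N)) :
    ContinuousOn (FF hT b x₀ w A) (Icc 0 T) := by
  unfold FF
  refine (continuousOn_const.add hw).add ?_
  exact (intervalIntegral.continuous_primitive
    (fun a b' => ((hb.comp (extIcc_cont hT A)).intervalIntegrable a b')) 0).continuousOn

/-- The Picard map for the reflected integral equation. -/
noncomputable def Phi (hN : 1 ≤ N) (θ : ℝ) (hT : (0:ℝ) ≤ T)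
    {b : EE N → EE N} (hb : Continuous b) (x₀ : EE N)
    {w : ℝ → EE N} (hw : ContinuousOn w (Icc 0 T))
    (A : C(Icc (0:ℝ) T, EE N)) : C(Icc (0:ℝ) T, EE N) :=
  ⟨(Icc (0:ℝ) T).restrict (fun t => Gam N hN θ (FF hT b x₀ w A) t), by
    apply ContinuousOn.restrict
    unfold Gam
    exact (FF_cont hT hb x₀ hw A).sub
      ((reg_continuousOn (FF_cont hT hb x₀ hw A)).smul continuousOn_const)⟩

lemma Phi_apply (hN : 1 ≤ N) (θ : ℝ) (hT : (0:ℝ) ≤ T)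
    {b : EE N → EE N} (hb : Continuous b) (x₀ : EE N)
    {w : ℝ → EE N} (hw : ContinuousOn w (Icc 0 T))
    (A : C(Icc (0:ℝ) T, EE N)) (x : Icc (0:ℝ) T) :
    Phi hN θ hT hb x₀ hw A x = Gam N hN θ (FF hT b x₀ w A) x := rfl

lemma step_bound (hN : 1 ≤ N) (θ : ℝ) (hT : (0:ℝ) ≤ T)
    {b : EE N → EE N} {K : NNReal} (hb : LipschitzWith K b) (x₀ : EE N)
    {w : ℝ → EE N} (hw : ContinuousOn w (Icc 0 T))
    (A B : C(Icc (0:ℝ) T, EE N)) {M : ℝ} (hM : 0 ≤ M) (n : ℕ)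
    (h : ∀ u ∈ Icc (0:ℝ) T, ‖extIcc hT A u - extIcc hT B u‖ ≤ M * u ^ n)
    {t : ℝ} (ht : t ∈ Icc (0:ℝ) T) :
    ‖Gam N hN θ (FF hT b x₀ w A) t - Gam N hN θ (FF hT b x₀ w B) t‖
      ≤ (1 + Real.sqrt N) * ((K : ℝ) * M * t ^ (n+1) / (n+1)) := by
  have hKMt : 0 ≤ (K:ℝ) * M * t ^ (n+1) / (n+1) := by
    apply div_nonneg _ (by positivity)
    exact mul_nonneg (mul_nonneg K.2 hM) (pow_nonneg ht.1 _)
  refine gam_dist hN (FF_cont hT hb.continuous x₀ hw A)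
    (FF_cont hT hb.continuous x₀ hw B) ht hKMt ?_
  intro u hu
  have huT : u ∈ Icc (0:ℝ) T := ⟨hu.1, hu.2.trans ht.2⟩
  have hiA : IntervalIntegrable (fun v => b (extIcc hT A v)) volume 0 u :=
    (hb.continuous.comp (extIcc_cont hT A)).intervalIntegrable 0 u
  have hiB : IntervalIntegrable (fun v => b (extIcc hT B v)) volume 0 u :=
    (hb.continuous.comp (extIcc_cont hT B)).intervalIntegrable 0 u
  have e : FF hT b x₀ w A u - FF hT b x₀ w B u
      = ∫ v in (0:ℝ)..u, (b (extIcc hT A v) - b (extIcc hT B v)) := by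
    rw [intervalIntegral.integral_sub hiA hiB]
    unfold FF; abel
  rw [e]
  have hbd : ∀ v ∈ uIoc (0:ℝ) u, ‖b (extIcc hT A v) - b (extIcc hT B v)‖ ≤ (K:ℝ) * (M * v ^ n) := by
    intro v hv
    rw [uIoc_of_le hu.1] at hv
    have hvT : v ∈ Icc (0:ℝ) T := ⟨hv.1.le, hv.2.trans huT.2⟩
    have h1 : ‖b (extIcc hT A v) - b (extIcc hT B v)‖
        ≤ (K:ℝ) * ‖extIcc hT A v - extIcc hT B v‖ := by
      simpa [dist_eq_norm] using hb.dist_le_mul (extIcc hT A v) (extIcc hT B v)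
    exact h1.trans (mul_le_mul_of_nonneg_left (h v hvT) K.2)
  have hgi : IntervalIntegrable (fun v => (K:ℝ) * (M * v ^ n)) volume 0 u :=
    Continuous.intervalIntegrable (by continuity) 0 u
  have h2 := intervalIntegral.norm_integral_le_abs_of_norm_le
    (ae_restrict_of_forall_mem measurableSet_uIoc hbd) hgi
  have h3 : (∫ v in (0:ℝ)..u, (K:ℝ) * (M * v ^ n)) = (K:ℝ) * M * u ^ (n+1) / (n+1) := by
    rw [intervalIntegral.integral_const_mul, intervalIntegral.integral_const_mul, integral_pow]
    push_cast
    ring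
  rw [h3] at h2
  have h4 : |(K:ℝ) * M * u ^ (n+1) / (n+1)| = (K:ℝ) * M * u ^ (n+1) / (n+1) := by
    apply abs_of_nonneg
    apply div_nonneg _ (by positivity)
    exact mul_nonneg (mul_nonneg K.2 hM) (pow_nonneg hu.1 _)
  rw [h4] at h2
  refine h2.trans ?_
  rw [div_le_div_iff_of_pos_right (by positivity)]
  exact mul_le_mul_of_nonneg_left (pow_le_pow_left₀ hu.1 hu.2 _) (mul_nonneg K.2 hM)

lemma iter_bound (hN : 1 ≤ N) (θ : ℝ) (hT : (0:ℝ) ≤ T)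
    {b : EE N → EE N} {K : NNReal} (hb : LipschitzWith K b) (x₀ : EE N)
    {w : ℝ → EE N} (hw : ContinuousOn w (Icc 0 T))
    (A B : C(Icc (0:ℝ) T, EE N)) : ∀ n : ℕ, ∀ t ∈ Icc (0:ℝ) T,
      ‖extIcc hT ((Phi hN θ hT hb.continuous x₀ hw)^[n] A) t
        - extIcc hT ((Phi hN θ hT hb.continuous x₀ hw)^[n] B) t‖
      ≤ dist A B * ((1 + Real.sqrt N) * (K : ℝ)) ^ n * t ^ n / n.factorial := by
  intro n
  induction n with
  | zero =>
    intro t ht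
    simp only [Function.iterate_zero_apply, pow_zero, Nat.factorial_zero, Nat.cast_one,
      mul_one, div_one]
    rw [extIcc_eq hT A ht, extIcc_eq hT B ht, ← dist_eq_norm]
    exact ContinuousMap.dist_apply_le_dist _
  | succ n ih =>
    intro t ht
    set Φ := Phi hN θ hT hb.continuous x₀ hw with hΦ
    set M : ℝ := dist A B * ((1 + Real.sqrt N) * (K : ℝ)) ^ n / n.factorial with hM
    have hM0 : 0 ≤ M := by
      apply div_nonneg _ (by positivity)
      apply mul_nonneg dist_nonneg
      apply pow_nonneg
      positivity
    have hih : ∀ u ∈ Icc (0:ℝ) T,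
        ‖extIcc hT (Φ^[n] A) u - extIcc hT (Φ^[n] B) u‖ ≤ M * u ^ n := by
      intro u hu
      refine (ih u hu).trans_eq ?_
      rw [hM]; ring
    have hstep := step_bound hN θ hT hb x₀ hw (Φ^[n] A) (Φ^[n] B) hM0 n hih ht
    have e1 : extIcc hT (Φ^[n+1] A) t = Gam N hN θ (FF hT b x₀ w (Φ^[n] A)) t := by
      rw [Function.iterate_succ_apply', extIcc_eq hT _ ht]
      rfl
    have e2 : extIcc hT (Φ^[n+1] B) t = Gam N hN θ (FF hT b x₀ w (Φ^[n] B)) t := by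
      rw [Function.iterate_succ_apply', extIcc_eq hT _ ht]
      rfl
    rw [e1, e2]
    refine hstep.trans_eq ?_
    rw [hM]
    have hfact : ((n+1).factorial : ℝ) = (n+1) * n.factorial := by
      rw [Nat.factorial_succ]; push_cast; ring
    rw [hfact]
    have hne1 : ((n:ℝ)+1) ≠ 0 := by positivity
    have hne2 : (n.factorial : ℝ) ≠ 0 := Nat.cast_ne_zero.2 n.factorial_ne_zero
    field_simp
    ring
  
end picard
/-- Existence and uniqueness for the deterministic reflected integral equation: there is exactly
one continuous `x` with `x = Γ(x₀ + w + ∫₀^· b(x(u))du)` on `[0,T]`, and with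
`ℓ = g_{x₀ + w + ∫₀^· b(x(u))du}`, the pair `(x, ℓ)` is the unique continuous pair solving the
associated Skorohod problem in `{1·y ≤ θ}` with reflection direction `-e_N`. -/
theorem reflected_integral_equation (N : ℕ) (hN : 1 ≤ N) (θ T : ℝ) (hT : 0 < T)
    (b : EuclideanSpace ℝ (Fin N) → EuclideanSpace ℝ (Fin N))
    (K : NNReal) (hb : LipschitzWith K b)
    (x₀ : EuclideanSpace ℝ (Fin N)) (hx₀ : sumC x₀ ≤ θ)
    (w : ℝ → EuclideanSpace ℝ (Fin N))
    (hw : ContinuousOn w (Icc 0 T)) (hw0 : w 0 = 0) :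
    ∃ x : ℝ → EuclideanSpace ℝ (Fin N),
      ContinuousOn x (Icc 0 T) ∧
      (∀ t ∈ Icc (0:ℝ) T,
        x t = Gam N hN θ (fun r => x₀ + w r + ∫ u in (0:ℝ)..r, b (x u)) t) ∧
      (∀ x' : ℝ → EuclideanSpace ℝ (Fin N), ContinuousOn x' (Icc 0 T) →
        (∀ t ∈ Icc (0:ℝ) T,
          x' t = Gam N hN θ (fun r => x₀ + w r + ∫ u in (0:ℝ)..r, b (x' u)) t) →
        ∀ t ∈ Icc (0:ℝ) T, x' t = x t) ∧
      (∀ ℓ : ℝ → ℝ, (∀ t : ℝ, ℓ t = reg N θ (fun r => x₀ + w r + ∫ u in (0:ℝ)..r, b (x u)) t) →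
        (ContinuousOn ℓ (Icc 0 T) ∧ MonotoneOn ℓ (Icc 0 T) ∧ ℓ 0 = 0 ∧
          (∀ t ∈ Icc (0:ℝ) T,
            x t = x₀ + w t + (∫ u in (0:ℝ)..t, b (x u)) - ℓ t • eN N hN) ∧
          (∀ t ∈ Icc (0:ℝ) T, sumC (x t) ≤ θ) ∧
          (∀ s t : ℝ, 0 ≤ s → s ≤ t → t ≤ T →
            (∀ u ∈ Icc s t, sumC (x u) < θ) → ℓ t = ℓ s)) ∧
        (∀ (y : ℝ → EuclideanSpace ℝ (Fin N)) (ℓ' : ℝ → ℝ),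
          ContinuousOn y (Icc 0 T) → ContinuousOn ℓ' (Icc 0 T) →
          MonotoneOn ℓ' (Icc 0 T) → ℓ' 0 = 0 →
          (∀ t ∈ Icc (0:ℝ) T,
            y t = x₀ + w t + (∫ u in (0:ℝ)..t, b (y u)) - ℓ' t • eN N hN) →
          (∀ t ∈ Icc (0:ℝ) T, sumC (y t) ≤ θ) →
          (∀ s t : ℝ, 0 ≤ s → s ≤ t → t ≤ T →
            (∀ u ∈ Icc s t, sumC (y u) < θ) → ℓ' t = ℓ' s) →
          ∀ t ∈ Icc (0:ℝ) T, y t = x t ∧ ℓ' t = ℓ t)) := by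
  classical
  have hT0 : (0:ℝ) ≤ T := hT.le
  haveI : Nonempty (Icc (0:ℝ) T) := ⟨⟨0, le_rfl, hT0⟩⟩
  haveI : CompactSpace (Icc (0:ℝ) T) := isCompact_iff_compactSpace.1 isCompact_Icc
  haveI : Nonempty C(Icc (0:ℝ) T, EE N) := ⟨ContinuousMap.const _ 0⟩
  set Φ : C(Icc (0:ℝ) T, EE N) → C(Icc (0:ℝ) T, EE N) :=
    Phi hN θ hT0 hb.continuous x₀ hw with hΦdef
  set Cc : ℝ := (1 + Real.sqrt N) * (K:ℝ) with hCcdef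
  have hCc0 : 0 ≤ Cc := by positivity
  obtain ⟨n, hn⟩ : ∃ n : ℕ, (Cc*T)^n / n.factorial < 1 :=
    ((FloorSemiring.tendsto_pow_div_factorial_atTop (Cc*T)).eventually_lt_const
      one_pos).exists
  set q : ℝ := (Cc*T)^n / n.factorial with hqdef
  have hq0 : 0 ≤ q :=
    div_nonneg (pow_nonneg (mul_nonneg hCc0 hT0) _) (by positivity)
  have hlip : ∀ A B, dist (Φ^[n] A) (Φ^[n] B) ≤ q * dist A B := by
    intro A B
    rw [ContinuousMap.dist_le (mul_nonneg hq0 dist_nonneg)]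
    intro xp
    have h1 : dist (Φ^[n] A xp) (Φ^[n] B xp)
        = ‖extIcc hT0 (Φ^[n] A) xp.1 - extIcc hT0 (Φ^[n] B) xp.1‖ := by
      rw [extIcc_eq hT0 _ xp.2, extIcc_eq hT0 _ xp.2, dist_eq_norm]
    rw [h1]
    refine (iter_bound hN θ hT0 hb x₀ hw A B n xp.1 xp.2).trans ?_
    have h2 : (xp.1:ℝ)^n ≤ T^n := pow_le_pow_left₀ xp.2.1 xp.2.2 n
    calc dist A B * ((1 + Real.sqrt N) * (K:ℝ))^n * xp.1^n / n.factorial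
        ≤ dist A B * ((1 + Real.sqrt N) * (K:ℝ))^n * T^n / n.factorial := by
          rw [div_le_div_iff_of_pos_right (by positivity)]
          exact mul_le_mul_of_nonneg_left h2
            (mul_nonneg dist_nonneg (pow_nonneg (by positivity) n))
      _ = q * dist A B := by
          rw [hqdef, hCcdef,
            show ((1+Real.sqrt N)*(K:ℝ)*T)^n = ((1+Real.sqrt N)*(K:ℝ))^n * T^n from
              mul_pow _ _ _]
          ring
  have hcontr : ContractingWith (Real.toNNReal q) (Φ^[n]) := by
    constructor
    · have h1 : (Real.toNNReal q : ℝ) < 1 := by rw [Real.coe_toNNReal q hq0]; exact hn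
      exact_mod_cast h1
    · refine LipschitzWith.of_dist_le_mul (fun A B => ?_)
      rw [Real.coe_toNNReal q hq0]
      exact hlip A B
  set z : C(Icc (0:ℝ) T, EE N) := hcontr.fixedPoint (Φ^[n]) with hzdef
  have hzfix : Φ z = z := hcontr.isFixedPt_fixedPoint_iterate
  have huniqFix : ∀ A, Φ A = A → A = z := fun A hA =>
    hcontr.fixedPoint_unique (Function.IsFixedPt.iterate hA n)
  -- the solution
  have hxeq : ∀ t ∈ Icc (0:ℝ) T,
      extIcc hT0 z t = Gam N hN θ (FF hT0 b x₀ w z) t := by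
    intro t ht
    rw [extIcc_eq hT0 z ht]
    have h1 : Φ z ⟨t, ht⟩ = z ⟨t, ht⟩ := by rw [hzfix]
    rw [← h1, hΦdef]
    rfl
  have hfc : ContinuousOn (FF hT0 b x₀ w z) (Icc 0 T) :=
    FF_cont hT0 hb.continuous x₀ hw z
  -- uniqueness of solutions of the fixed point equation
  have huniq' : ∀ x' : ℝ → EuclideanSpace ℝ (Fin N), ContinuousOn x' (Icc 0 T) →
      (∀ t ∈ Icc (0:ℝ) T,
        x' t = Gam N hN θ (fun r => x₀ + w r + ∫ u in (0:ℝ)..r, b (x' u)) t) →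
      ∀ t ∈ Icc (0:ℝ) T, x' t = extIcc hT0 z t := by
    intro x' hx'c hx'eq
    set A : C(Icc (0:ℝ) T, EE N) := ⟨(Icc (0:ℝ) T).restrict x', hx'c.restrict⟩ with hAdef
    have hextA : ∀ u ∈ Icc (0:ℝ) T, extIcc hT0 A u = x' u := by
      intro u hu
      rw [extIcc_eq hT0 A hu]
      rfl
    have hFA : ∀ r ∈ Icc (0:ℝ) T,
        FF hT0 b x₀ w A r = x₀ + w r + ∫ u in (0:ℝ)..r, b (x' u) := by
      intro r hr
      unfold FF
      congr 1
      refine intervalIntegral.integral_congr (fun v hv => ?_)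
      rw [uIcc_of_le hr.1] at hv
      rw [hextA v ⟨hv.1, hv.2.trans hr.2⟩]
    have hA : Φ A = A := by
      refine ContinuousMap.ext (fun xp => ?_)
      have e1 : reg N θ (FF hT0 b x₀ w A) xp.1
          = reg N θ (fun r => x₀ + w r + ∫ u in (0:ℝ)..r, b (x' u)) xp.1 :=
        reg_congr (fun u hu => hFA u ⟨hu.1, hu.2.trans xp.2.2⟩)
      show Gam N hN θ (FF hT0 b x₀ w A) xp.1 = x' xp.1
      rw [hx'eq xp.1 xp.2]
      unfold Gam
      rw [hFA xp.1 xp.2, e1]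
    have hAz : A = z := huniqFix A hA
    intro t ht
    have h1 : x' t = A ⟨t, ht⟩ := rfl
    rw [h1, hAz, ← extIcc_eq hT0 z ht]
  refine ⟨extIcc hT0 z, (extIcc_cont hT0 z).continuousOn, hxeq, huniq', ?_⟩
  -- the regulator part
  intro ℓ hℓ
  have hℓ' : ∀ t : ℝ, ℓ t = reg N θ (FF hT0 b x₀ w z) t := hℓ
  have hℓfun : ℓ = reg N θ (FF hT0 b x₀ w z) := funext hℓ'
  constructor
  · refine ⟨?_, ?_, ?_, ?_, ?_, ?_⟩
    · rw [hℓfun]; exact reg_continuousOn hfc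
    · intro s hs t ht hst
      rw [hℓ' s, hℓ' t]
      exact reg_mono hfc hs.1 hst ht
    · rw [hℓ' 0, reg_zero]
      have h1 : FF hT0 b x₀ w z 0 = x₀ := by
        unfold FF
        rw [hw0, intervalIntegral.integral_same]
        simp
      rw [h1]
      exact max_eq_right (sub_nonpos.2 hx₀)
    · intro t ht
      have h1 := hxeq t ht
      unfold Gam at h1
      rw [h1, hℓ' t]
      rfl
    · intro t ht
      rw [hxeq t ht]
      unfold Gam
      rw [sumC_sub, sumC_smul, sumC_eN hN, mul_one]
      linarith [sub_le_reg (θ := θ) hfc ht]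
    · -- flatness
      intro s t hs0 hst htT hlt
      rw [hℓ' s, hℓ' t]
      have hsT : s ∈ Icc (0:ℝ) T := ⟨hs0, hst.trans htT⟩
      have htT' : t ∈ Icc (0:ℝ) T := ⟨hs0.trans hst, htT⟩
      refine le_antisymm ?_ (reg_mono hfc hs0 hst htT')
      have hstT : Icc s t ⊆ Icc (0:ℝ) T := Icc_subset_Icc hs0 htT
      obtain ⟨u', hu', hmax⟩ := isCompact_Icc.exists_isMaxOn (nonempty_Icc.2 hst)
        (((gfun_cont (θ := θ) hfc)).mono hstT)
      have hu'T : u' ∈ Icc (0:ℝ) T := hstT hu'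
      have hkey : max (sumC (FF hT0 b x₀ w z u') - θ) 0 ≤ reg N θ (FF hT0 b x₀ w z) s := by
        rcases le_or_gt (sumC (FF hT0 b x₀ w z u') - θ) 0 with h0 | h0
        · rw [max_eq_right h0]
          exact reg_nonneg hfc hsT
        · have hx' := hlt u' hu'
          rw [hxeq u' hu'T] at hx'
          unfold Gam at hx'
          rw [sumC_sub, sumC_smul, sumC_eN hN, mul_one] at hx'
          have h1 : max (sumC (FF hT0 b x₀ w z u') - θ) 0 < reg N θ (FF hT0 b x₀ w z) u' := by
            rw [max_eq_left h0.le]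
            linarith
          have h2 : reg N θ (FF hT0 b x₀ w z) u'
              ≤ max (reg N θ (FF hT0 b x₀ w z) s) (max (sumC (FF hT0 b x₀ w z u') - θ) 0) := by
            refine reg_le hu'T.1 (fun v hv => ?_)
            rcases le_or_gt v s with h3 | h3
            · exact le_max_of_le_left (le_reg hfc ⟨hv.1, h3⟩ hsT)
            · exact le_max_of_le_right (hmax ⟨h3.le, hv.2.trans hu'.2⟩)
          have h4 := h1.trans_le h2
          rcases lt_max_iff.1 h4 with h5 | h5
          · exact h5.le
          · exact absurd h5 (lt_irrefl _)
      refine reg_le htT'.1 (fun v hv => ?_)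
      rcases le_or_gt v s with h3 | h3
      · exact le_reg hfc ⟨hv.1, h3⟩ hsT
      · exact le_trans (hmax ⟨h3.le, hv.2⟩) hkey
  · -- uniqueness of the Skorohod pair
    intro y ℓ' hyc hl'c hl'mono hl'0 hyeq hyle hflat t ht
    set Y : C(Icc (0:ℝ) T, EE N) := ⟨(Icc (0:ℝ) T).restrict y, hyc.restrict⟩ with hYdef
    have hextY : ∀ u ∈ Icc (0:ℝ) T, extIcc hT0 Y u = y u := by
      intro u hu
      rw [extIcc_eq hT0 Y hu]
      rfl
    have hFY : ∀ r ∈ Icc (0:ℝ) T,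
        FF hT0 b x₀ w Y r = x₀ + w r + ∫ u in (0:ℝ)..r, b (y u) := by
      intro r hr
      unfold FF
      congr 1
      refine intervalIntegral.integral_congr (fun v hv => ?_)
      rw [uIcc_of_le hr.1] at hv
      rw [hextY v ⟨hv.1, hv.2.trans hr.2⟩]
    have hfYc : ContinuousOn (FF hT0 b x₀ w Y) (Icc 0 T) :=
      FF_cont hT0 hb.continuous x₀ hw Y
    have hl'nonneg : ∀ u ∈ Icc (0:ℝ) T, 0 ≤ ℓ' u := by
      intro u hu
      rw [← hl'0]
      exact hl'mono ⟨le_rfl, hT0⟩ hu hu.1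
    have hsumY : ∀ u ∈ Icc (0:ℝ) T, sumC (FF hT0 b x₀ w Y u) = sumC (y u) + ℓ' u := by
      intro u hu
      have e : y u = FF hT0 b x₀ w Y u - ℓ' u • eN N hN := by
        rw [hFY u hu]
        exact hyeq u hu
      rw [e, sumC_sub, sumC_smul, sumC_eN hN, mul_one]
      ring
    have hclaim : ∀ t ∈ Icc (0:ℝ) T, ℓ' t = reg N θ (FF hT0 b x₀ w Y) t := by
      intro t ht
      refine le_antisymm ?_ ?_
      · by_contra hcon
        push_neg at hcon
        set M : ℝ := reg N θ (FF hT0 b x₀ w Y) t with hMdef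
        have hM0 : 0 ≤ M := reg_nonneg hfYc ht
        set Aset : Set ℝ := Icc 0 t ∩ ℓ' ⁻¹' (Iic M) with hAsetdef
        have hclosed : IsClosed Aset :=
          (hl'c.mono (Icc_subset_Icc le_rfl ht.2)).preimage_isClosed_of_isClosed
            isClosed_Icc isClosed_Iic
        have hne : Aset.Nonempty := ⟨0, ⟨le_rfl, ht.1⟩, by
          simp only [mem_preimage, mem_Iic, hl'0]; exact hM0⟩
        have hcpt : IsCompact Aset :=
          isCompact_Icc.of_isClosed_subset hclosed inter_subset_left
        have hsmem : sSup Aset ∈ Aset := hcpt.sSup_mem hne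
        set s : ℝ := sSup Aset with hsdef
        have hs_icc : s ∈ Icc (0:ℝ) t := hsmem.1
        have hsM : ℓ' s ≤ M := hsmem.2
        have hst : s < t := by
          rcases lt_or_eq_of_le hs_icc.2 with h | h
          · exact h
          · rw [h] at hsM; linarith
        have hgt : ∀ u ∈ Ioc s t, M < ℓ' u := by
          intro u hu
          by_contra hc
          push_neg at hc
          have hmem : u ∈ Aset := ⟨⟨le_trans hs_icc.1 hu.1.le, hu.2⟩, hc⟩
          exact absurd (le_csSup hcpt.bddAbove hmem) (not_le.2 hu.1)
        have hylt : ∀ u ∈ Ioc s t, sumC (y u) < θ := by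
          intro u hu
          have huT : u ∈ Icc (0:ℝ) T := ⟨le_trans hs_icc.1 hu.1.le, hu.2.trans ht.2⟩
          have h1 : sumC (FF hT0 b x₀ w Y u) - θ ≤ M :=
            le_trans (le_max_left _ 0) (le_reg hfYc ⟨huT.1, hu.2⟩ ht)
          have h2 := hsumY u huT
          have h3 := hgt u hu
          linarith
        have hconst : ∀ s' ∈ Ioc s t, ℓ' t = ℓ' s' := by
          intro s' hs'
          exact hflat s' t (hs_icc.1.trans hs'.1.le) hs'.2 ht.2
            (fun u hu => hylt u ⟨lt_of_lt_of_le hs'.1 hu.1, hu.2⟩)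
        haveI : (nhdsWithin s (Ioc s t)).NeBot := by
          rw [nhdsWithin_Ioc_eq_nhdsGT hst]
          exact nhdsGT_neBot s
        have htd1 : Filter.Tendsto ℓ' (nhdsWithin s (Ioc s t)) (nhds (ℓ' s)) := by
          refine (hl'c s ⟨hs_icc.1, hs_icc.2.trans ht.2⟩).mono_left
            (nhdsWithin_mono _ (fun u hu => ?_))
          exact ⟨le_trans hs_icc.1 hu.1.le, hu.2.trans ht.2⟩
        have htd2 : Filter.Tendsto ℓ' (nhdsWithin s (Ioc s t)) (nhds (ℓ' t)) := by
          refine Filter.Tendsto.congr' ?_ tendsto_const_nhds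
          exact Filter.eventually_of_mem self_mem_nhdsWithin (fun u hu => hconst u hu)
        have heq := tendsto_nhds_unique htd1 htd2
        linarith
      · refine reg_le ht.1 (fun u hu => ?_)
        have huT : u ∈ Icc (0:ℝ) T := ⟨hu.1, hu.2.trans ht.2⟩
        have h1 := hsumY u huT
        have h2 := hyle u huT
        have h3 := hl'mono huT ht hu.2
        have h4 := hl'nonneg u huT
        rw [max_le_iff]
        constructor <;> linarith
    have hyGam : ∀ t ∈ Icc (0:ℝ) T,
        y t = Gam N hN θ (fun r => x₀ + w r + ∫ u in (0:ℝ)..r, b (y u)) t := by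
      intro t ht
      unfold Gam
      have e1 : reg N θ (fun r => x₀ + w r + ∫ u in (0:ℝ)..r, b (y u)) t
          = reg N θ (FF hT0 b x₀ w Y) t :=
        reg_congr (fun u hu => (hFY u ⟨hu.1, hu.2.trans ht.2⟩).symm)
      rw [e1, ← hclaim t ht]
      exact hyeq t ht
    have hyx : ∀ u ∈ Icc (0:ℝ) T, y u = extIcc hT0 z u := huniq' y hyc hyGam
    refine ⟨hyx t ht, ?_⟩
    rw [hclaim t ht, hℓ' t]
    refine (reg_congr (fun u hu => ?_)).trans rfl
    -- FF Y u = FF z u for u ∈ [0, t]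
    have huT : u ∈ Icc (0:ℝ) T := ⟨hu.1, hu.2.trans ht.2⟩
    rw [hFY u huT]
    unfold FF
    congr 1
    refine intervalIntegral.integral_congr (fun v hv => ?_)
    rw [uIcc_of_le huT.1] at hv
    rw [hyx v ⟨hv.1, hv.2.trans huT.2⟩]
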